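/- Let σ be any stopping time with E σ < ∞. Then lim_{x→∞} δ_σ(x) = 0 if and only if lim_{x→∞} P(M_σ > x)/F̄(x) = E σ. -/

import Mathlib

open MeasureTheory ProbabilityTheory Filter Set
open scoped ENNReal ENat

noncomputable section

/-- The tail (right-tail) distribution function `F̄(x) = μ((x,∞))` of a law `μ` on `ℝ`. -/
def rtail (μ : Measure ℝ) (x : ℝ) : ℝ := (μ (Set.Ioi x)).toReal

/-- `μ` (with distribution function `F`) is long-tailed (LT): `F̄(x) > 0` for all `x` and
`F̄(x-h)/F̄(x) → 1` as `x → ∞` for every fixed `h > 0`. -/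
def LongTailed (μ : Measure ℝ) : Prop :=
  (∀ x : ℝ, 0 < μ (Set.Ioi x)) ∧
    ∀ h : ℝ, 0 < h →
      Filter.Tendsto (fun x : ℝ => rtail μ (x - h) / rtail μ x) Filter.atTop (nhds 1)

/-- The distribution `μ` (with distribution function `G`) belongs to the class `S*`:
`Ḡ(x) > 0` for all `x` and `∫_0^x Ḡ(x-y) Ḡ(y) dy ∼ 2 m_{G⁺} Ḡ(x)` as `x → ∞`,
where `m_{G⁺} = ∫_0^∞ Ḡ(t) dt`. -/
def MemSstar (μ : Measure ℝ) : Prop :=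
  (∀ x : ℝ, 0 < μ (Set.Ioi x)) ∧
    Filter.Tendsto
      (fun x : ℝ => (∫ y in (0:ℝ)..x, rtail μ (x - y) * rtail μ y) /
        (2 * (∫ y in Set.Ioi (0:ℝ), rtail μ y) * rtail μ x))
      Filter.atTop (nhds 1)

/-- The partial sums `S_n` of the random walk: `walk ξ n = ξ 0 + ⋯ + ξ (n-1)`,
where `ξ i` denotes the increment `ξ_{i+1}` of the paper (so `S_0 = 0`). -/
def walk {Ω : Type*} (ξ : ℕ → Ω → ℝ) (n : ℕ) (ω : Ω) : ℝ := ∑ i ∈ Finset.range n, ξ i ω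

/-- The event `A_{σ,2}(x) = {μ(x) ≤ σ, S_{μ(x)-1} > h(x)}`, where
`μ(x) = min{n : S_n > x}` is the first passage time over level `x`. -/
def eventA2 {Ω : Type*} (ξ : ℕ → Ω → ℝ) (σ : Ω → ℕ) (h : ℝ → ℝ) (x : ℝ) : Set Ω :=
  {ω | ∃ n : ℕ, n ≤ σ ω ∧ (∀ k, k < n → walk ξ k ω ≤ x) ∧ x < walk ξ n ω ∧
    h x < walk ξ (n - 1) ω}

/-- The event `A_{τ,2}(x)` with `τ = min{n ≥ 1 : S_n ≤ 0}`:  here `μ(x)` is the first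
passage time over level `x` and the requirement `μ(x) ≤ τ` is expressed by
`S_k > 0` for all `1 ≤ k < μ(x)`. -/
def eventA2tau {Ω : Type*} (ξ : ℕ → Ω → ℝ) (h : ℝ → ℝ) (x : ℝ) : Set Ω :=
  {ω | ∃ n : ℕ, (∀ k, 1 ≤ k → k < n → 0 < walk ξ k ω) ∧
    (∀ k, k < n → walk ξ k ω ≤ x) ∧ x < walk ξ n ω ∧ h x < walk ξ (n - 1) ω}

/-- `δ(x) = sup_{y ≥ x} P(A₂(y)) / F̄(y)` (valued in `ℝ≥0∞`). -/
def deltaSup {Ω : Type*} [MeasurableSpace Ω] (P : Measure Ω) (μ : Measure ℝ)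
    (A : ℝ → Set Ω) (x : ℝ) : ℝ≥0∞ :=
  ⨆ y ∈ Set.Ici x, P (A y) / μ (Set.Ioi y)


set_option linter.unusedSectionVars false
set_option maxHeartbeats 1000000

section FZauxDefs
variable {Ω : Type*}

/-- The event `A_{σ,1}(x)` (first passage with small last-but-one value). -/
def A1set (ξ : ℕ → Ω → ℝ) (σ : Ω → ℕ) (h : ℝ → ℝ) (x : ℝ) : Set Ω :=
  {ω | ∃ n : ℕ, n ≤ σ ω ∧ (∀ k, k < n → walk ξ k ω ≤ x) ∧ x < walk ξ n ω ∧
    walk ξ (n - 1) ω ≤ h x}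

def Bset (ξ : ℕ → Ω → ℝ) (σ : Ω → ℕ) (h : ℝ → ℝ) (n : ℕ) (x : ℝ) : Set Ω :=
  {ω | n + 1 ≤ σ ω ∧ (∀ k, k < n + 1 → walk ξ k ω ≤ x) ∧ walk ξ n ω ≤ h x}

def Dset (ξ : ℕ → Ω → ℝ) (σ : Ω → ℕ) (h : ℝ → ℝ) (n : ℕ) (x : ℝ) : Set Ω :=
  Bset ξ σ h n x ∩ {ω | x < walk ξ (n + 1) ω}

end FZauxDefs
section aux
variable {μ : Measure ℝ} [IsProbabilityMeasure μ]

lemma rtail_pos (hlt : ∀ x : ℝ, 0 < μ (Set.Ioi x)) (x : ℝ) : 0 < rtail μ x :=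
  ENNReal.toReal_pos (hlt x).ne' (measure_ne_top μ _)

lemma measurable_ennF : Measurable (fun t : ℝ => μ (Set.Ioi t)) := by
  have : Antitone (fun t : ℝ => μ (Set.Ioi t)) := fun a b hab => measure_mono (Ioi_subset_Ioi hab)
  exact this.measurable

/-- real-ratio shift lemma for arbitrary real `c` -/
lemma rtail_shift (hlt : LongTailed μ) (c : ℝ) :
    Tendsto (fun x : ℝ => rtail μ (x - c) / rtail μ x) atTop (nhds 1) := by
  rcases lt_trichotomy c 0 with hc | rfl | hc
  · -- c < 0 : use inverse of the ratio at shifted point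
    have hd : 0 < -c := by linarith
    have h1 := hlt.2 (-c) hd
    have h2 : Tendsto (fun x : ℝ => rtail μ (x - c - (-c)) / rtail μ (x - c)) atTop (nhds 1) :=
      h1.comp (tendsto_atTop_add_const_right atTop (-c) tendsto_id)
    have h3 : Tendsto (fun x : ℝ => (rtail μ (x - c - (-c)) / rtail μ (x - c))⁻¹) atTop
        (nhds 1⁻¹) := h2.inv₀ one_ne_zero
    simp only [inv_one] at h3
    refine h3.congr (fun x => ?_)
    have hx : x - c - (-c) = x := by ring
    rw [hx, inv_div]
  · refine tendsto_const_nhds.congr (fun x => ?_)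
    rw [sub_zero, div_self (rtail_pos hlt.1 x).ne']
  · exact hlt.2 c hc

/-- ENNReal version of the shift lemma -/
lemma ennF_shift (hlt : LongTailed μ) (c : ℝ) :
    Tendsto (fun x : ℝ => μ (Set.Ioi (x - c)) / μ (Set.Ioi x)) atTop (nhds 1) := by
  have h := ENNReal.tendsto_ofReal (rtail_shift hlt c)
  rw [ENNReal.ofReal_one] at h
  refine h.congr (fun x => ?_)
  rw [ENNReal.ofReal_div_of_pos (rtail_pos hlt.1 x)]
  unfold rtail
  rw [ENNReal.ofReal_toReal (measure_ne_top μ _), ENNReal.ofReal_toReal (measure_ne_top μ _)]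


lemma hdom2_of_hh3 (hpos : ∀ x : ℝ, 0 < μ (Set.Ioi x)) {h : ℝ → ℝ}
    (hh3 : Tendsto (fun x => rtail μ (x - h x) / rtail μ x) atTop (nhds 1)) :
    ∀ᶠ x in atTop, μ (Set.Ioi (x - h x)) ≤ 2 * μ (Set.Ioi x) := by
  have h2 : ∀ᶠ x in atTop, rtail μ (x - h x) / rtail μ x < 2 :=
    hh3.eventually_lt_const (by norm_num)
  filter_upwards [h2] with x hx
  have hrpos := rtail_pos hpos x
  have hle : rtail μ (x - h x) ≤ 2 * rtail μ x := by
    rw [div_lt_iff₀ hrpos] at hx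
    linarith
  have h2top : (2 : ℝ≥0∞) * μ (Set.Ioi x) ≠ ∞ :=
    ENNReal.mul_ne_top (by norm_num) (measure_ne_top μ _)
  rw [← ENNReal.toReal_le_toReal (measure_ne_top μ _) h2top]
  rw [ENNReal.toReal_mul]
  simpa [rtail] using hle

end aux

section key
variable {Ω : Type*} [MeasurableSpace Ω] (P : Measure Ω) [IsProbabilityMeasure P]
  (ξ : ℕ → Ω → ℝ) (μ : Measure ℝ) [IsProbabilityMeasure μ]
  (hmeas : ∀ n, Measurable (ξ n)) (hlaw : ∀ n, P.map (ξ n) = μ)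
  (𝓕 : ℕ → MeasurableSpace Ω) (hFmono : Monotone 𝓕)
  (hFle : ∀ n, 𝓕 n ≤ ‹MeasurableSpace Ω›)
  (hFadapt : ∀ n, Measurable[𝓕 (n + 1)] (ξ n))
  (hFindep : ∀ n, Indep (MeasurableSpace.comap (ξ n) inferInstance) (𝓕 n) P)
  (σ : Ω → ℕ) (hstop : ∀ n : ℕ, MeasurableSet[𝓕 n] {ω | σ ω ≤ n})
  (h : ℝ → ℝ)

include hFmono hFadapt in
lemma walk_F_meas (n : ℕ) {m : ℕ} (hnm : n ≤ m) : Measurable[𝓕 m] (walk ξ n) := by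
  unfold walk
  refine Finset.measurable_sum _ (fun i hi => ?_)
  have hi' : i + 1 ≤ m := by
    have := Finset.mem_range.mp hi; omega
  exact (hFadapt i).mono (hFmono hi') le_rfl

include hFmono hFadapt hstop in
lemma Bset_F_meas (n : ℕ) (x : ℝ) : MeasurableSet[𝓕 n] (Bset ξ σ h n x) := by
  have h1 : MeasurableSet[𝓕 n] {ω | n + 1 ≤ σ ω} := by
    have := (hstop n).compl
    convert this using 1
    ext ω; simp only [Set.mem_compl_iff, Set.mem_setOf_eq, not_le]; omega
  have h2 : MeasurableSet[𝓕 n] {ω | ∀ k, k < n + 1 → walk ξ k ω ≤ x} := by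
    have : {ω | ∀ k, k < n + 1 → walk ξ k ω ≤ x}
        = ⋂ k ∈ Finset.range (n+1), {ω | walk ξ k ω ≤ x} := by
      ext ω; simp
    rw [this]
    refine MeasurableSet.biInter (Finset.range (n+1) : Set ℕ).to_countable (fun k hk => ?_)
    have hk' : k ≤ n := by simpa [Nat.lt_succ_iff] using Finset.mem_range.mp hk
    exact measurableSet_le (walk_F_meas ξ 𝓕 hFmono hFadapt k hk') measurable_const
  have h3 : MeasurableSet[𝓕 n] {ω | walk ξ n ω ≤ h x} :=
    measurableSet_le (walk_F_meas ξ 𝓕 hFmono hFadapt n le_rfl) measurable_const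
  exact (h1.inter (h2.inter h3))

include hmeas hlaw hFmono hFle hFadapt hFindep hstop in
lemma key_formula (n : ℕ) (x : ℝ) :
    P (Bset ξ σ h n x ∩ {ω | x < walk ξ (n + 1) ω})
      = ∫⁻ ω in Bset ξ σ h n x, μ (Set.Ioi (x - walk ξ n ω)) ∂P := by
  classical
  set B := Bset ξ σ h n x with hB
  have hBF : MeasurableSet[𝓕 n] B := Bset_F_meas ξ 𝓕 hFmono hFadapt σ hstop h n x
  have hBamb : MeasurableSet B := hFle n _ hBF
  have hTF : Measurable[𝓕 n] (walk ξ n) := walk_F_meas ξ 𝓕 hFmono hFadapt n le_rfl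
  have hTamb : Measurable (walk ξ n) := hTF.mono (hFle n) le_rfl
  set Y : Ω → ℝ × ℝ := fun ω => (walk ξ n ω, B.indicator (fun _ => (1:ℝ)) ω) with hY
  have hYF : Measurable[𝓕 n] Y :=
    hTF.prodMk (((measurable_const : Measurable[𝓕 n] fun _ : Ω => (1:ℝ))).indicator hBF)
  have hYamb : Measurable Y := hYF.mono (hFle n) le_rfl
  -- independence of Y and ξ n
  have hIndep : IndepFun Y (ξ n) P := by
    rw [IndepFun_iff]
    intro t1 t2 ht1 ht2
    have ht1' : MeasurableSet[𝓕 n] t1 := by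
      obtain ⟨s, hs, rfl⟩ := ht1
      exact hYF hs
    have := (Indep_iff _ _ _).mp (hFindep n) t2 t1 ht2 ht1'
    rw [Set.inter_comm, this, mul_comm]
  have hmap : P.map (fun ω => (Y ω, ξ n ω)) = (P.map Y).prod (P.map (ξ n)) :=
    (indepFun_iff_map_prod_eq_prod_map_map hYamb.aemeasurable (hmeas n).aemeasurable).mp hIndep
  have hennF : Measurable (fun t : ℝ => μ (Set.Ioi t)) := by
    have : Antitone (fun t : ℝ => μ (Set.Ioi t)) :=
      fun a b hab => measure_mono (Ioi_subset_Ioi hab)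
    exact this.measurable
  set C : Set ((ℝ × ℝ) × ℝ) := {p | p.1.2 = 1 ∧ x - p.1.1 < p.2} with hC
  have hCmeas : MeasurableSet C := by
    have h1 : MeasurableSet {p : (ℝ × ℝ) × ℝ | p.1.2 = 1} :=
      (measurable_fst.snd) (measurableSet_singleton (1:ℝ))
    have h2 : MeasurableSet {p : (ℝ × ℝ) × ℝ | x - p.1.1 < p.2} :=
      measurableSet_lt (measurable_const.sub measurable_fst.fst) measurable_snd
    exact h1.inter h2
  have hpre : (fun ω => (Y ω, ξ n ω)) ⁻¹' C = B ∩ {ω | x < walk ξ (n + 1) ω} := by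
    ext ω
    simp only [Set.mem_preimage, hC, Set.mem_setOf_eq, Set.mem_inter_iff, hY]
    constructor
    · rintro ⟨h1, h2⟩
      have hωB : ω ∈ B := by
        by_contra hωB
        simp [Set.indicator_of_notMem hωB] at h1
      refine ⟨hωB, ?_⟩
      have : walk ξ (n+1) ω = walk ξ n ω + ξ n ω := by
        unfold walk; rw [Finset.sum_range_succ]
      rw [this]; linarith
    · rintro ⟨hωB, h2⟩
      refine ⟨by simp [Set.indicator_of_mem hωB], ?_⟩
      have : walk ξ (n+1) ω = walk ξ n ω + ξ n ω := by
        unfold walk; rw [Finset.sum_range_succ]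
      rw [this] at h2; linarith
  set g : ℝ × ℝ → ℝ≥0∞ := fun q => if q.2 = 1 then μ (Set.Ioi (x - q.1)) else 0 with hg
  have hgmeas : Measurable g := by
    refine Measurable.ite ?_ (hennF.comp (measurable_const.sub measurable_fst)) measurable_const
    exact measurable_snd (measurableSet_singleton (1:ℝ))
  calc P (B ∩ {ω | x < walk ξ (n + 1) ω})
      = P ((fun ω => (Y ω, ξ n ω)) ⁻¹' C) := by rw [hpre]
    _ = (P.map (fun ω => (Y ω, ξ n ω))) C := by
        rw [Measure.map_apply (hYamb.prodMk (hmeas n)) hCmeas]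
    _ = ((P.map Y).prod μ) C := by rw [hmap, hlaw n]
    _ = ∫⁻ y, μ (Prod.mk y ⁻¹' C) ∂(P.map Y) := Measure.prod_apply hCmeas
    _ = ∫⁻ y, g y ∂(P.map Y) := by
        refine lintegral_congr (fun y => ?_)
        rw [hg]
        by_cases hy : y.2 = 1
        · simp only [hy, if_true]
          congr 1
          ext u; simp [hC, hy]
        · simp only [hy, if_false]
          have : Prod.mk y ⁻¹' C = ∅ := by
            ext u; simp [hC, hy]
          simp [this]
    _ = ∫⁻ ω, g (Y ω) ∂P := lintegral_map hgmeas hYamb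
    _ = ∫⁻ ω, B.indicator (fun ω => μ (Set.Ioi (x - walk ξ n ω))) ω ∂P := by
        refine lintegral_congr (fun ω => ?_)
        by_cases hω : ω ∈ B
        · simp [hg, hY, Set.indicator_of_mem hω]
        · simp [hg, hY, Set.indicator_of_notMem hω]
    _ = ∫⁻ ω in B, μ (Set.Ioi (x - walk ξ n ω)) ∂P := by
        rw [lintegral_indicator hBamb]

end key

section tail
variable {Ω : Type*} [MeasurableSpace Ω] (P : Measure Ω) (σ : Ω → ℕ)

lemma tsum_tail_eq (hσ : ∀ n : ℕ, MeasurableSet {ω | n < σ ω}) :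
    ∑' n : ℕ, P {ω | n < σ ω} = ∫⁻ ω, (σ ω : ℝ≥0∞) ∂P := by
  classical
  calc ∑' n : ℕ, P {ω | n < σ ω}
      = ∑' n : ℕ, ∫⁻ ω, ({ω | n < σ ω} : Set Ω).indicator (1 : Ω → ℝ≥0∞) ω ∂P := by
        refine tsum_congr (fun n => ?_)
        rw [lintegral_indicator (hσ n)]
        simp
    _ = ∫⁻ ω, ∑' n : ℕ, ({ω | n < σ ω} : Set Ω).indicator (1 : Ω → ℝ≥0∞) ω ∂P := by
        rw [← lintegral_tsum (fun n => (measurable_one.indicator (hσ n)).aemeasurable)]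
    _ = ∫⁻ ω, (σ ω : ℝ≥0∞) ∂P := by
        refine lintegral_congr (fun ω => ?_)
        have h1 : ∀ n : ℕ, ({ω | n < σ ω} : Set Ω).indicator (1 : Ω → ℝ≥0∞) ω
            = if n < σ ω then 1 else 0 := by
          intro n
          by_cases hn : n < σ ω
          · simp [Set.indicator_of_mem, hn]
          · simp [Set.indicator_of_notMem, hn]
        rw [tsum_congr h1]
        calc ∑' n : ℕ, (if n < σ ω then (1:ℝ≥0∞) else 0)
            = ∑ n ∈ Finset.range (σ ω), (if n < σ ω then (1:ℝ≥0∞) else 0) := by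
              refine tsum_eq_sum (fun n hn => ?_)
              simp only [Finset.mem_range, not_lt] at hn
              simp [Nat.not_lt.mpr hn]
          _ = ∑ n ∈ Finset.range (σ ω), (1:ℝ≥0∞) :=
              Finset.sum_congr rfl (fun n hn => if_pos (Finset.mem_range.mp hn))
          _ = (σ ω : ℝ≥0∞) := by simp

end tail

section decomp
variable {Ω : Type*} (ξ : ℕ → Ω → ℝ) (σ : Ω → ℕ) (h : ℝ → ℝ)

lemma walk_zero (ω : Ω) : walk ξ 0 ω = 0 := by simp [walk]

lemma A1_eq_iUnion {x : ℝ} (hx : 0 ≤ x) :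
    A1set ξ σ h x = ⋃ n : ℕ, Dset ξ σ h n x := by
  ext ω
  simp only [A1set, Dset, Bset, Set.mem_setOf_eq, Set.mem_iUnion, Set.mem_inter_iff]
  constructor
  · rintro ⟨n, hn, hk, hxn, hh⟩
    obtain ⟨m, rfl⟩ : ∃ m, n = m + 1 := by
      rcases n with _ | m
      · exfalso; rw [walk_zero] at hxn; linarith
      · exact ⟨m, rfl⟩
    exact ⟨m, ⟨hn, hk, by simpa using hh⟩, hxn⟩
  · rintro ⟨m, ⟨hσm, hk, hh⟩, hx'⟩
    exact ⟨m + 1, hσm, hk, hx', by simpa using hh⟩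

lemma first_passage_unique {x : ℝ} {ω : Ω} {n₁ n₂ : ℕ}
    (h1 : (∀ k, k < n₁ → walk ξ k ω ≤ x) ∧ x < walk ξ n₁ ω)
    (h2 : (∀ k, k < n₂ → walk ξ k ω ≤ x) ∧ x < walk ξ n₂ ω) : n₁ = n₂ := by
  by_contra hne
  rcases Nat.lt_or_ge n₁ n₂ with hlt | hge
  · exact absurd (h2.1 n₁ hlt) (not_le.mpr h1.2)
  · have hlt : n₂ < n₁ := by omega
    exact absurd (h1.1 n₂ hlt) (not_le.mpr h2.2)

lemma Dset_disjoint (x : ℝ) : Pairwise (Function.onFun Disjoint (fun n => Dset ξ σ h n x)) := by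
  intro n m hnm
  rw [Function.onFun, Set.disjoint_left]
  rintro ω ⟨⟨_, hk₁, _⟩, hx₁⟩ ⟨⟨_, hk₂, _⟩, hx₂⟩
  exact hnm (by
    have := first_passage_unique ξ (n₁ := n + 1) (n₂ := m + 1) (x := x) (ω := ω)
      ⟨hk₁, hx₁⟩ ⟨hk₂, hx₂⟩
    omega)

lemma M_eq_union {x : ℝ} (hx : 0 ≤ x) :
    {ω | ∃ i : ℕ, i ≤ σ ω ∧ x < walk ξ i ω} = A1set ξ σ h x ∪ eventA2 ξ σ h x := by
  classical
  ext ω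
  simp only [Set.mem_setOf_eq, Set.mem_union, A1set, eventA2]
  constructor
  · rintro ⟨i, hiσ, hxi⟩
    have hex : ∃ n, x < walk ξ n ω := ⟨i, hxi⟩
    set n₀ := Nat.find hex with hn₀def
    have hn₀ : x < walk ξ n₀ ω := Nat.find_spec hex
    have hmin : ∀ k, k < n₀ → walk ξ k ω ≤ x := fun k hk =>
      not_lt.mp (Nat.find_min hex hk)
    have hn₀i : n₀ ≤ i := Nat.find_min' hex hxi
    have hσ : n₀ ≤ σ ω := le_trans hn₀i hiσ
    by_cases hcase : walk ξ (n₀ - 1) ω ≤ h x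
    · exact Or.inl ⟨n₀, hσ, hmin, hn₀, hcase⟩
    · exact Or.inr ⟨n₀, hσ, hmin, hn₀, not_le.mp hcase⟩
  · rintro (⟨n, hσ, _, hxn, _⟩ | ⟨n, hσ, _, hxn, _⟩) <;> exact ⟨n, hσ, hxn⟩

lemma A1_A2_disjoint (x : ℝ) : Disjoint (A1set ξ σ h x) (eventA2 ξ σ h x) := by
  rw [Set.disjoint_left]
  rintro ω ⟨n₁, _, hk₁, hx₁, hle⟩ ⟨n₂, _, hk₂, hx₂, hgt⟩
  have := first_passage_unique ξ (x := x) (ω := ω) ⟨hk₁, hx₁⟩ ⟨hk₂, hx₂⟩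
  subst this
  linarith

end decomp

section meas
variable {Ω : Type*} [MeasurableSpace Ω] (ξ : ℕ → Ω → ℝ)
  (𝓕 : ℕ → MeasurableSpace Ω) (hFle : ∀ n, 𝓕 n ≤ ‹MeasurableSpace Ω›)
  (σ : Ω → ℕ) (hstop : ∀ n : ℕ, MeasurableSet[𝓕 n] {ω | σ ω ≤ n})
  (hmeas : ∀ n, Measurable (ξ n))

include hmeas in
lemma walk_meas (n : ℕ) : Measurable (walk ξ n) :=
  Finset.measurable_sum _ (fun i _ => hmeas i)

include hFle hstop in
lemma meas_lt_sigma (n : ℕ) : MeasurableSet {ω | n < σ ω} := by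
  have : {ω | n < σ ω} = {ω | σ ω ≤ n}ᶜ := by ext ω; simp
  rw [this]
  exact (hFle n _ (hstop n)).compl

include hFle hstop in
lemma meas_le_sigma (n : ℕ) : MeasurableSet {ω | n ≤ σ ω} := by
  rcases n with _ | m
  · simp
  · have : {ω | m + 1 ≤ σ ω} = {ω | m < σ ω} := by ext ω; simp [Nat.succ_le_iff]
    rw [this]; exact meas_lt_sigma 𝓕 hFle σ hstop m

include hFle hstop hmeas in
lemma Bset_meas (h : ℝ → ℝ) (n : ℕ) (x : ℝ) : MeasurableSet (Bset ξ σ h n x) := by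
  have h1 := meas_le_sigma 𝓕 hFle σ hstop (n + 1)
  have h2 : MeasurableSet {ω | ∀ k, k < n + 1 → walk ξ k ω ≤ x} := by
    have : {ω | ∀ k, k < n + 1 → walk ξ k ω ≤ x}
        = ⋂ k ∈ Finset.range (n+1), {ω | walk ξ k ω ≤ x} := by ext ω; simp
    rw [this]
    exact MeasurableSet.biInter (Finset.range (n+1) : Set ℕ).to_countable
      (fun k _ => measurableSet_le (walk_meas ξ hmeas k) measurable_const)
  exact h1.inter (h2.inter (measurableSet_le (walk_meas ξ hmeas n) measurable_const))

include hFle hstop hmeas in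
lemma Dset_meas (h : ℝ → ℝ) (n : ℕ) (x : ℝ) : MeasurableSet (Dset ξ σ h n x) :=
  (Bset_meas ξ 𝓕 hFle σ hstop hmeas h n x).inter
    (measurableSet_lt measurable_const (walk_meas ξ hmeas (n + 1)))

end meas



section stepC
variable {Ω : Type*} [MeasurableSpace Ω] (P : Measure Ω) [IsProbabilityMeasure P]
  (ξ : ℕ → Ω → ℝ) (μ : Measure ℝ) [IsProbabilityMeasure μ]
  (𝓕 : ℕ → MeasurableSpace Ω) (hFle : ∀ n, 𝓕 n ≤ ‹MeasurableSpace Ω›)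
  (σ : Ω → ℕ) (hstop : ∀ n : ℕ, MeasurableSet[𝓕 n] {ω | σ ω ≤ n})
  (hmeas : ∀ n, Measurable (ξ n))
  (h : ℝ → ℝ)

include hFle hstop hmeas in
lemma stepC (hlt : LongTailed μ)
    (hh2 : Tendsto h atTop atTop)
    (hdom : ∀ᶠ x in atTop, μ (Set.Ioi (x - h x)) ≤ 2 * μ (Set.Ioi x))
    (hkey : ∀ n x, P (Dset ξ σ h n x)
      = ∫⁻ ω in Bset ξ σ h n x, μ (Set.Ioi (x - walk ξ n ω)) ∂P)
    (n : ℕ) :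
    Tendsto (fun x => P (Dset ξ σ h n x) / μ (Set.Ioi x)) atTop
      (nhds (P {ω | n < σ ω})) := by
  classical
  set ennF : ℝ → ℝ≥0∞ := fun t => μ (Set.Ioi t) with hennF
  have hennFmeas : Measurable ennF := by
    have : Antitone ennF := fun a b hab => measure_mono (Ioi_subset_Ioi hab)
    exact this.measurable
  have hennF0 : ∀ x, ennF x ≠ 0 := fun x => (hlt.1 x).ne'
  have hennFtop : ∀ x, ennF x ≠ ∞ := fun x => measure_ne_top μ _
  set F : ℝ → Ω → ℝ≥0∞ := fun x ω =>
    (Bset ξ σ h n x).indicator (fun ω => ennF (x - walk ξ n ω)) ω * (ennF x)⁻¹ with hF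
  have hFint : ∀ x, ∫⁻ ω, F x ω ∂P = P (Dset ξ σ h n x) / ennF x := by
    intro x
    have hm1 : Measurable (fun ω => ennF (x - walk ξ n ω)) :=
      hennFmeas.comp (measurable_const.sub (walk_meas ξ hmeas n))
    rw [hF]
    simp only
    rw [lintegral_mul_const _ (hm1.indicator (Bset_meas ξ 𝓕 hFle σ hstop hmeas h n x))]
    rw [lintegral_indicator (Bset_meas ξ 𝓕 hFle σ hstop hmeas h n x)]
    rw [← hkey n x, div_eq_mul_inv]
  have hlim_set : MeasurableSet {ω | n < σ ω} := meas_lt_sigma 𝓕 hFle σ hstop n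
  have hDCT := tendsto_lintegral_filter_of_dominated_convergence (μ := P)
    (l := atTop) (F := F)
    (f := ({ω | n < σ ω} : Set Ω).indicator (fun _ => (1:ℝ≥0∞)))
    (fun _ => (2 : ℝ≥0∞))
    (Eventually.of_forall (fun x =>
      ((hennFmeas.comp (measurable_const.sub (walk_meas ξ hmeas n))).indicator
        (Bset_meas ξ 𝓕 hFle σ hstop hmeas h n x) : Measurable _).mul_const _))
    ?_ ?_ ?_
  · have : ∫⁻ ω, ({ω | n < σ ω} : Set Ω).indicator (fun _ => (1:ℝ≥0∞)) ω ∂P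
        = P {ω | n < σ ω} := by
      rw [lintegral_indicator hlim_set, setLIntegral_const, one_mul]
    rw [this] at hDCT
    exact (Tendsto.congr (fun x => hFint x) hDCT)
  · -- bound
    filter_upwards [hdom] with x hx
    refine Eventually.of_forall (fun ω => ?_)
    by_cases hω : ω ∈ Bset ξ σ h n x
    · have h1 : ennF (x - walk ξ n ω) ≤ ennF (x - h x) := by
        refine measure_mono (Ioi_subset_Ioi ?_)
        have h2 : walk ξ n ω ≤ h x := hω.2.2
        linarith
      calc F x ω = ennF (x - walk ξ n ω) * (ennF x)⁻¹ := by
            rw [hF]; simp only; rw [Set.indicator_of_mem hω]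
        _ ≤ (2 * ennF x) * (ennF x)⁻¹ := mul_le_mul_left (le_trans h1 hx) _
        _ = 2 * (ennF x * (ennF x)⁻¹) := by rw [mul_assoc]
        _ = 2 := by rw [ENNReal.mul_inv_cancel (hennF0 x) (hennFtop x), mul_one]
    · rw [hF]; simp only; rw [Set.indicator_of_notMem hω, zero_mul]
      positivity
  · -- finiteness of bound
    rw [lintegral_const]
    simp [measure_univ]
  · -- pointwise limit
    refine Eventually.of_forall (fun ω => ?_)
    by_cases hσω : n < σ ω
    · have hind : ({ω | n < σ ω} : Set Ω).indicator (fun _ => (1:ℝ≥0∞)) ω = 1 :=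
        Set.indicator_of_mem (show ω ∈ {ω | n < σ ω} from hσω) _
      rw [hind]
      have hev : (fun x => ennF (x - walk ξ n ω) * (ennF x)⁻¹) =ᶠ[atTop]
          (fun x => F x ω) := by
        have h1 : ∀ᶠ x in atTop, ∀ k ∈ Finset.range (n+1), walk ξ k ω ≤ x :=
          (eventually_all_finset _).mpr (fun k _ => eventually_ge_atTop _)
        have h2 : ∀ᶠ x in atTop, walk ξ n ω ≤ h x :=
          hh2.eventually (eventually_ge_atTop _)
        filter_upwards [h1, h2] with x hx1 hx2
        have hω : ω ∈ Bset ξ σ h n x :=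
          ⟨hσω, fun k hk => hx1 k (Finset.mem_range.mpr hk), hx2⟩
        rw [hF]; simp only; rw [Set.indicator_of_mem hω]
      have hshift : Tendsto (fun x => ennF (x - walk ξ n ω) * (ennF x)⁻¹) atTop (nhds 1) := by
        refine (ennF_shift hlt (walk ξ n ω)).congr (fun x => ?_)
        rw [div_eq_mul_inv]
      exact Tendsto.congr' hev hshift
    · have hind : ({ω | n < σ ω} : Set Ω).indicator (fun _ => (1:ℝ≥0∞)) ω = 0 :=
        Set.indicator_of_notMem (show ω ∉ {ω | n < σ ω} from hσω) _
      rw [hind]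
      have hzero : ∀ x, F x ω = 0 := by
        intro x
        have hω : ω ∉ Bset ξ σ h n x := fun hc => hσω (Nat.lt_of_succ_le hc.1)
        rw [hF]; simp only; rw [Set.indicator_of_notMem hω, zero_mul]
      exact tendsto_const_nhds.congr (fun x => (hzero x).symm)

include hFle hstop hmeas in
lemma stepD (hlt : LongTailed μ) (hh2 : Tendsto h atTop atTop)
    (hdom : ∀ᶠ x in atTop, μ (Set.Ioi (x - h x)) ≤ 2 * μ (Set.Ioi x))
    (hkey : ∀ n x, P (Dset ξ σ h n x)
      = ∫⁻ ω in Bset ξ σ h n x, μ (Set.Ioi (x - walk ξ n ω)) ∂P)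
    (hfin : ∑' n : ℕ, P {ω | n < σ ω} ≠ ∞) :
    Tendsto (fun x => ∑' n : ℕ, P (Dset ξ σ h n x) / μ (Set.Ioi x)) atTop
      (nhds (∑' n : ℕ, P {ω | n < σ ω})) := by
  classical
  have hDCT := tendsto_lintegral_filter_of_dominated_convergence
    (μ := (Measure.count : Measure ℕ)) (l := (atTop : Filter ℝ))
    (F := fun x n => P (Dset ξ σ h n x) / μ (Set.Ioi x))
    (f := fun n => P {ω | n < σ ω})
    (fun n => 2 * P {ω | n < σ ω})
    (Eventually.of_forall (fun x => measurable_from_nat))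
    ?_ ?_ ?_
  · have h1 : ∀ x : ℝ, ∫⁻ n, P (Dset ξ σ h n x) / μ (Set.Ioi x) ∂Measure.count
        = ∑' n : ℕ, P (Dset ξ σ h n x) / μ (Set.Ioi x) := fun x => lintegral_count _
    have h2 : ∫⁻ n, P {ω | n < σ ω} ∂(Measure.count : Measure ℕ)
        = ∑' n : ℕ, P {ω | n < σ ω} := lintegral_count _
    rw [h2] at hDCT
    exact hDCT.congr (fun x => h1 x)
  · -- bound
    filter_upwards [hdom] with x hx
    refine Eventually.of_forall (fun n => ?_)
    have hB := Bset_meas ξ 𝓕 hFle σ hstop hmeas h n x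
    have hsub : Bset ξ σ h n x ⊆ {ω | n < σ ω} := fun ω hω => Nat.lt_of_succ_le hω.1
    have hstep : P (Dset ξ σ h n x) ≤ μ (Set.Ioi (x - h x)) * P {ω | n < σ ω} := by
      calc P (Dset ξ σ h n x)
          = ∫⁻ ω in Bset ξ σ h n x, μ (Set.Ioi (x - walk ξ n ω)) ∂P := hkey n x
        _ ≤ ∫⁻ _ in Bset ξ σ h n x, μ (Set.Ioi (x - h x)) ∂P := by
            refine setLIntegral_mono' hB (fun ω hω => ?_)
            refine measure_mono (Ioi_subset_Ioi ?_)
            have h2 : walk ξ n ω ≤ h x := hω.2.2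
            linarith
        _ = μ (Set.Ioi (x - h x)) * P (Bset ξ σ h n x) := setLIntegral_const _ _
        _ ≤ μ (Set.Ioi (x - h x)) * P {ω | n < σ ω} :=
            mul_le_mul_right (measure_mono hsub) _
    rw [ENNReal.div_le_iff (hlt.1 x).ne' (measure_ne_top μ _)]
    calc P (Dset ξ σ h n x) ≤ μ (Set.Ioi (x - h x)) * P {ω | n < σ ω} := hstep
      _ ≤ (2 * μ (Set.Ioi x)) * P {ω | n < σ ω} := mul_le_mul_left hx _
      _ = 2 * P {ω | n < σ ω} * μ (Set.Ioi x) := by ring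
  · -- finiteness
    rw [lintegral_count, ENNReal.tsum_mul_left]
    exact ENNReal.mul_ne_top (by norm_num) hfin
  · -- pointwise
    exact Eventually.of_forall (fun n =>
      stepC P ξ μ 𝓕 hFle σ hstop hmeas h hlt hh2 hdom hkey n)

end stepC


/-- **Lemma 5** (Foss–Zachary).  Under NEG and LT, let `σ` be any stopping time with
`E σ < ∞`.  Then `δ_σ(x) → 0` as `x → ∞` if and only if
`P(M_σ > x)/F̄(x) → E σ` as `x → ∞`. -/
theorem deltaSigma_iff_max_asymptotics
    {Ω : Type*} [MeasurableSpace Ω] (P : Measure Ω) [IsProbabilityMeasure P]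
    (ξ : ℕ → Ω → ℝ) (μ : Measure ℝ) [IsProbabilityMeasure μ]
    (hmeas : ∀ n, Measurable (ξ n))
    (hlaw : ∀ n, P.map (ξ n) = μ)
    (hiid : iIndepFun ξ P)
    (m : ℝ) (hm : 0 < m) (hint : Integrable id μ) (hmean : (∫ x, x ∂μ) = -m)
    (hlt : LongTailed μ)
    (h : ℝ → ℝ) (hh0 : ∀ x, 0 ≤ h x) (hh1 : ∀ x, 0 ≤ x → h x ≤ x / 2)
    (hh2 : Filter.Tendsto h Filter.atTop Filter.atTop)
    (hh3 : Filter.Tendsto (fun x => rtail μ (x - h x) / rtail μ x) Filter.atTop (nhds 1))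
    (hh4 : ∃ x₀ : ℝ, ∀ x t : ℝ, x₀ ≤ x → 0 ≤ t → h (x + t) ≤ h x + t)
    (𝓕 : ℕ → MeasurableSpace Ω) (hFmono : Monotone 𝓕)
    (hFle : ∀ n, 𝓕 n ≤ ‹MeasurableSpace Ω›)
    (hFadapt : ∀ n, Measurable[𝓕 (n + 1)] (ξ n))
    (hFindep : ∀ n, Indep (MeasurableSpace.comap (ξ n) inferInstance) (𝓕 n) P)
    (σ : Ω → ℕ) (hstop : ∀ n : ℕ, MeasurableSet[𝓕 n] {ω | σ ω ≤ n})
    (hσint : Integrable (fun ω => (σ ω : ℝ)) P) :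
    Filter.Tendsto (deltaSup P μ (eventA2 ξ σ h)) Filter.atTop (nhds 0)
      ↔ Filter.Tendsto
          (fun x : ℝ => (P {ω | ∃ i : ℕ, i ≤ σ ω ∧ x < walk ξ i ω}).toReal / rtail μ x)
          Filter.atTop (nhds (∫ ω, (σ ω : ℝ) ∂P)) := by
  classical
  have hennF0 : ∀ x : ℝ, μ (Set.Ioi x) ≠ 0 := fun x => (hlt.1 x).ne'
  have hennFtop : ∀ x : ℝ, μ (Set.Ioi x) ≠ ∞ := fun x => measure_ne_top μ _
  have hwalk : ∀ n, Measurable (walk ξ n) := fun n => walk_meas ξ hmeas n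
  have hlesig : ∀ n, MeasurableSet {ω | n ≤ σ ω} := fun n => meas_le_sigma 𝓕 hFle σ hstop n
  have hA2meas : ∀ x, MeasurableSet (eventA2 ξ σ h x) := by
    intro x
    have : eventA2 ξ σ h x = ⋃ n : ℕ, ({ω | n ≤ σ ω} ∩
        (⋂ k ∈ Finset.range n, {ω | walk ξ k ω ≤ x}) ∩ {ω | x < walk ξ n ω} ∩
        {ω | h x < walk ξ (n - 1) ω}) := by
      ext ω; simp only [eventA2, Set.mem_setOf_eq, Set.mem_iUnion, Set.mem_inter_iff,
        Set.mem_iInter, Finset.mem_range]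
      constructor
      · rintro ⟨n, h1, h2, h3, h4⟩; exact ⟨n, ⟨⟨h1, fun k hk => h2 k hk⟩, h3⟩, h4⟩
      · rintro ⟨n, ⟨⟨h1, h2⟩, h3⟩, h4⟩; exact ⟨n, h1, fun k hk => h2 k hk, h3, h4⟩
    rw [this]
    refine MeasurableSet.iUnion (fun n => ?_)
    refine (((hlesig n).inter ?_).inter
      (measurableSet_lt measurable_const (hwalk n))).inter
      (measurableSet_lt measurable_const (hwalk (n - 1)))
    exact MeasurableSet.biInter (Finset.range n : Set ℕ).to_countable
      (fun k _ => measurableSet_le (hwalk k) measurable_const)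
  have hA1meas : ∀ x, MeasurableSet (A1set ξ σ h x) := by
    intro x
    have : A1set ξ σ h x = ⋃ n : ℕ, ({ω | n ≤ σ ω} ∩
        (⋂ k ∈ Finset.range n, {ω | walk ξ k ω ≤ x}) ∩ {ω | x < walk ξ n ω} ∩
        {ω | walk ξ (n - 1) ω ≤ h x}) := by
      ext ω; simp only [A1set, Set.mem_setOf_eq, Set.mem_iUnion, Set.mem_inter_iff,
        Set.mem_iInter, Finset.mem_range]
      constructor
      · rintro ⟨n, h1, h2, h3, h4⟩; exact ⟨n, ⟨⟨h1, fun k hk => h2 k hk⟩, h3⟩, h4⟩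
      · rintro ⟨n, ⟨⟨h1, h2⟩, h3⟩, h4⟩; exact ⟨n, h1, fun k hk => h2 k hk, h3, h4⟩
    rw [this]
    refine MeasurableSet.iUnion (fun n => ?_)
    refine (((hlesig n).inter ?_).inter
      (measurableSet_lt measurable_const (hwalk n))).inter
      (measurableSet_le (hwalk (n - 1)) measurable_const)
    exact MeasurableSet.biInter (Finset.range n : Set ℕ).to_countable
      (fun k _ => measurableSet_le (hwalk k) measurable_const)
  have hkey : ∀ n x, P (Dset ξ σ h n x)
      = ∫⁻ ω in Bset ξ σ h n x, μ (Set.Ioi (x - walk ξ n ω)) ∂P :=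
    fun n x => key_formula P ξ μ hmeas hlaw 𝓕 hFmono hFle hFadapt hFindep σ hstop h n x
  have hdom : ∀ᶠ x in atTop, μ (Set.Ioi (x - h x)) ≤ 2 * μ (Set.Ioi x) :=
    hdom2_of_hh3 hlt.1 hh3
  set Eσ : ℝ≥0∞ := ∑' n : ℕ, P {ω | n < σ ω} with hEσdef
  have hEσ_eq : Eσ = ∫⁻ ω, (σ ω : ℝ≥0∞) ∂P :=
    tsum_tail_eq P σ (fun n => meas_lt_sigma 𝓕 hFle σ hstop n)
  have hEσ_top : Eσ ≠ ∞ := by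
    rw [hEσ_eq]
    have h1 := hσint.hasFiniteIntegral
    rw [HasFiniteIntegral] at h1
    have h2 : ∀ ω, (σ ω : ℝ≥0∞) = ‖(σ ω : ℝ)‖ₑ := by
      intro ω
      rw [← ENNReal.ofReal_natCast]
      rw [Real.enorm_eq_ofReal (Nat.cast_nonneg _)]
    rw [lintegral_congr h2]
    exact h1.ne
  have hEσ_real : (∫ ω, (σ ω : ℝ) ∂P) = Eσ.toReal := by
    rw [hEσ_eq]
    rw [integral_eq_lintegral_of_nonneg_ae
      (Eventually.of_forall (fun ω => Nat.cast_nonneg _)) hσint.aestronglyMeasurable]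
    congr 1
    refine lintegral_congr (fun ω => ?_)
    rw [ENNReal.ofReal_natCast]
  -- Claim 1 : P(A1)/F̄ → Eσ
  have claim1 : Tendsto (fun x => P (A1set ξ σ h x) / μ (Set.Ioi x)) atTop (nhds Eσ) := by
    have hD := stepD P ξ μ 𝓕 hFle σ hstop hmeas h hlt hh2 hdom hkey hEσ_top
    refine Tendsto.congr' ?_ hD
    filter_upwards [eventually_ge_atTop (0:ℝ)] with x hx
    rw [A1_eq_iUnion ξ σ h hx,
      measure_iUnion (Dset_disjoint ξ σ h x) (fun n => Dset_meas ξ 𝓕 hFle σ hstop hmeas h n x)]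
    rw [eq_comm]
    simp only [div_eq_mul_inv]
    exact ENNReal.tsum_mul_right.symm
  set q2 : ℝ → ℝ≥0∞ := fun x => P (eventA2 ξ σ h x) / μ (Set.Ioi x) with hq2def
  set rM : ℝ → ℝ≥0∞ :=
    fun x => P {ω | ∃ i : ℕ, i ≤ σ ω ∧ x < walk ξ i ω} / μ (Set.Ioi x) with hrMdef
  have hsum : ∀ᶠ x in atTop, rM x = P (A1set ξ σ h x) / μ (Set.Ioi x) + q2 x := by
    filter_upwards [eventually_ge_atTop (0:ℝ)] with x hx
    rw [hrMdef]
    simp only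
    rw [M_eq_union ξ σ h hx,
      measure_union ((A1_A2_disjoint ξ σ h x)) (hA2meas x)]
    rw [ENNReal.div_add_div_same]
  have hp1top : ∀ x, P (A1set ξ σ h x) / μ (Set.Ioi x) ≠ ∞ := fun x =>
    (ENNReal.div_lt_top (measure_ne_top P _) (hennF0 x)).ne
  have hrMtop : ∀ x, rM x ≠ ∞ := fun x =>
    (ENNReal.div_lt_top (measure_ne_top P _) (hennF0 x)).ne
  have hreal_eq : ∀ x, (P {ω | ∃ i : ℕ, i ≤ σ ω ∧ x < walk ξ i ω}).toReal / rtail μ x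
      = (rM x).toReal := by
    intro x
    rw [hrMdef]
    simp only
    rw [ENNReal.toReal_div]
    rfl
  have hiff2 : Tendsto (fun x : ℝ =>
        (P {ω | ∃ i : ℕ, i ≤ σ ω ∧ x < walk ξ i ω}).toReal / rtail μ x)
        atTop (nhds (∫ ω, (σ ω : ℝ) ∂P))
      ↔ Tendsto rM atTop (nhds Eσ) := by
    rw [hEσ_real]
    rw [show (fun x : ℝ => (P {ω | ∃ i : ℕ, i ≤ σ ω ∧ x < walk ξ i ω}).toReal / rtail μ x)
        = fun x => (rM x).toReal from funext hreal_eq]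
    exact ENNReal.tendsto_toReal_iff hrMtop hEσ_top
  constructor
  · -- δ → 0  ⇒  ratio → Eσ
    intro hδ
    have hq2 : Tendsto q2 atTop (nhds 0) := by
      refine tendsto_of_tendsto_of_tendsto_of_le_of_le tendsto_const_nhds hδ
        (fun x => by positivity) (fun x => ?_)
      exact le_biSup (f := fun y => P (eventA2 ξ σ h y) / μ (Set.Ioi y)) (Set.mem_Ici.mpr le_rfl)
    rw [hiff2]
    have hadd : Tendsto (fun x => P (A1set ξ σ h x) / μ (Set.Ioi x) + q2 x) atTop
        (nhds (Eσ + 0)) := claim1.add hq2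
    rw [add_zero] at hadd
    exact Tendsto.congr' (hsum.mono (fun x hx => hx.symm)) hadd
  · -- ratio → Eσ  ⇒  δ → 0
    intro hratio
    have hrM : Tendsto rM atTop (nhds Eσ) := hiff2.mp hratio
    have hq2 : Tendsto q2 atTop (nhds 0) := by
      have hsub : Tendsto (fun x => rM x - P (A1set ξ σ h x) / μ (Set.Ioi x)) atTop
          (nhds (Eσ - Eσ)) := ENNReal.Tendsto.sub hrM claim1 (Or.inl hEσ_top)
      rw [tsub_self] at hsub
      refine Tendsto.congr' ?_ hsub
      filter_upwards [hsum] with x hx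
      rw [hx, ENNReal.add_sub_cancel_left (hp1top x)]
    rw [ENNReal.tendsto_nhds_zero]
    intro ε hε
    have hev := (ENNReal.tendsto_nhds_zero.mp hq2) ε hε
    obtain ⟨x₀, hx₀⟩ := eventually_atTop.mp hev
    rw [eventually_atTop]
    refine ⟨x₀, fun x hxx₀ => ?_⟩
    rw [deltaSup]
    exact iSup₂_le (fun y hy => hx₀ y (le_trans hxx₀ hy))
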